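/- Let Δ : K⟨Y⟩ → K⟨⟨Y* ⊗ Y*⟩⟩ be the concatenation-morphism defined on letters by Δ(y_s) = y_s ⊗ 1 + 1 ⊗ y_s + Σ_{n,m} γ^{y_s}_{y_n,y_m} y_n ⊗ y_m. Then for all words u, v, w ∈ Y*, one has ⟨u ⧢_φ v, w⟩ = ⟨u ⊗ v, Δ(w)⟩. -/

import Mathlib

noncomputable section

open Finsupp

variable {K : Type*} [CommRing K] [Algebra ℚ K]
variable {Y : Type*} [DecidableEq Y]

/-- The word `w ∈ Y*` viewed as a basis element of `K⟨Y⟩`. -/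
def word (w : List Y) : List Y →₀ K := Finsupp.single w 1

/-- Left concatenation by a letter, as a linear endomorphism of `K⟨Y⟩`. -/
def consL (a : Y) : (List Y →₀ K) →ₗ[K] (List Y →₀ K) :=
  Finsupp.lmapDomain K K (List.cons a)

/-- `m` is the `φ`-deformed shuffle product: it satisfies the initialization
`1 ⧢ w = w ⧢ 1 = w` and the recursion
`(au) ⧢ (bv) = a (u ⧢ bv) + b (au ⧢ v) + φ(a,b)(u ⧢ v)`. -/
def IsPhiShuffle (φ : Y → Y → (Y →₀ K))
    (m : (List Y →₀ K) →ₗ[K] (List Y →₀ K) →ₗ[K] (List Y →₀ K)) : Prop :=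
  (∀ w : List Y, m (word []) (word w) = word w) ∧
  (∀ w : List Y, m (word w) (word []) = word w) ∧
  ∀ (a b : Y) (u v : List Y),
    m (word (a :: u)) (word (b :: v)) =
      consL a (m (word u) (word (b :: v))) + consL b (m (word (a :: u)) (word v)) +
      (φ a b).sum fun c k => k • consL c (m (word u) (word v))

/-- Bilinear extension of `φ` to `KY`. -/
def phiExt (φ : Y → Y → (Y →₀ K)) (p q : Y →₀ K) : Y →₀ K :=
  p.sum fun a ka => q.sum fun b kb => (ka * kb) • φ a b

/-- The extension of `φ` to `KY ⊗ KY → KY` is associative. -/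
def PhiAssoc (φ : Y → Y → (Y →₀ K)) : Prop :=
  ∀ a b c : Y, phiExt φ (φ a b) (Finsupp.single c 1) = phiExt φ (Finsupp.single a 1) (φ b c)

/-- The extension of `φ` is commutative. -/
def PhiComm (φ : Y → Y → (Y →₀ K)) : Prop := ∀ a b : Y, φ a b = φ b a

/-- `φ` is dualizable: for every letter `z` only finitely many pairs of letters
have `z` in the support of their `φ`-product. -/
def PhiDualizable (φ : Y → Y → (Y →₀ K)) : Prop :=
  ∀ z : Y, {p : Y × Y | φ p.1 p.2 z ≠ 0}.Finite

/-- Extension of an associative `φ` to nonempty words: `φ(xw) = φ(x, φ(w))`. -/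
def phiWord (φ : Y → Y → (Y →₀ K)) : List Y → (Y →₀ K)
  | [] => 0
  | [x] => Finsupp.single x 1
  | x :: y :: w => (phiWord φ (y :: w)).sum fun b k => k • φ x b

/-- `φ` is moderate: for every letter `y`, only finitely many nonempty words `w`
satisfy `⟨y, φ(w)⟩ ≠ 0`. -/
def PhiModerate (φ : Y → Y → (Y →₀ K)) : Prop :=
  ∀ y : Y, {w : List Y | w ≠ [] ∧ phiWord φ w y ≠ 0}.Finite

/-- Pairing of two polynomials (the words form an orthonormal basis). -/
def pairPP (p q : List Y →₀ K) : K := p.sum fun w a => a * q w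

/-- Pairing `⟨S, p⟩` of a series with a polynomial. -/
def pairPS (S : List Y → K) (p : List Y →₀ K) : K := p.sum fun w a => a * S w

/-- Concatenation product on `K⟨Y⟩`. -/
def concP (p q : List Y →₀ K) : List Y →₀ K :=
  p.sum fun u a => q.sum fun v b => Finsupp.single (u ++ v) (a * b)

/-- Concatenation powers. -/
def concPow (p : List Y →₀ K) : ℕ → (List Y →₀ K)
  | 0 => word []
  | n + 1 => concP p (concPow p n)

/-- Powers with respect to a bilinear product `m`. -/
def mpow (m : (List Y →₀ K) →ₗ[K] (List Y →₀ K) →ₗ[K] (List Y →₀ K))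
    (p : List Y →₀ K) : ℕ → (List Y →₀ K)
  | 0 => word []
  | n + 1 => m p (mpow m p n)

/-- `m`-product of a list of polynomials. -/
def prodM (m : (List Y →₀ K) →ₗ[K] (List Y →₀ K) →ₗ[K] (List Y →₀ K))
    (L : List (List Y →₀ K)) : List Y →₀ K :=
  L.foldr (fun p acc => m p acc) (word [])

/-- The unit series. -/
def oneS : List Y → K := fun w => if w = [] then 1 else 0

/-- Concatenation (Cauchy) product of series. -/
def mulS (S T : List Y → K) : List Y → K := fun w =>
  ∑ i ∈ Finset.range (w.length + 1), S (w.take i) * T (w.drop i)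

/-- Concatenation powers of a series. -/
def powS (S : List Y → K) : ℕ → (List Y → K)
  | 0 => oneS
  | n + 1 => mulS S (powS S n)

/-- Concatenation product of a list of series. -/
def prodS (L : List (List Y → K)) : List Y → K := L.foldr (fun S acc => mulS S acc) oneS

/-- The coproduct `Δ_{⧢_φ}` dual to `m`, on series: `Δ(S)(u,v) = ⟨S, u ⧢_φ v⟩`. -/
def DeltaS (m : (List Y →₀ K) →ₗ[K] (List Y →₀ K) →ₗ[K] (List Y →₀ K))
    (S : List Y → K) : List Y × List Y → K :=
  fun p => pairPS S (m (word p.1) (word p.2))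

/-- `S` is primitive: `Δ_{⧢_φ}(S) = S ⊗ 1 + 1 ⊗ S`. -/
def PrimS (m : (List Y →₀ K) →ₗ[K] (List Y →₀ K) →ₗ[K] (List Y →₀ K))
    (S : List Y → K) : Prop :=
  ∀ u v : List Y, DeltaS m S (u, v) =
    (if v = [] then S u else 0) + (if u = [] then S v else 0)

/-- `S` is group-like: `⟨S,1⟩ = 1` and `Δ_{⧢_φ}(S) = S ⊗ S`. -/
def GroupLikeS (m : (List Y →₀ K) →ₗ[K] (List Y →₀ K) →ₗ[K] (List Y →₀ K))
    (S : List Y → K) : Prop :=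
  S [] = 1 ∧ ∀ u v : List Y, DeltaS m S (u, v) = S u * S v

/-- `Δfn` is the (finitely supported) dual coproduct witnessing dualizability of `m`:
`⟨u ⧢_φ v, w⟩ = ⟨u ⊗ v, Δ(w)⟩`. -/
def IsDualWitness (m : (List Y →₀ K) →ₗ[K] (List Y →₀ K) →ₗ[K] (List Y →₀ K))
    (Δfn : List Y → (List Y × List Y →₀ K)) : Prop :=
  ∀ u v w : List Y, (m (word u) (word v)) w = Δfn w (u, v)

/-- All factorizations of a word into nonempty blocks. -/
def cuts : List Y → List (List (List Y))
  | [] => [[]]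
  | a :: w =>
    (cuts w).flatMap fun parts =>
      match parts with
      | [] => [[[a]]]
      | p :: ps => [[a] :: p :: ps, (a :: p) :: ps]

/-- The extended Eulerian projector `π₁` on series:
`π₁(S) = Σ_{k≥1} ((-1)^{k-1}/k) Σ_{u_1⋯u_k = w, u_i ∈ Y⁺} ⟨S, u_1 ⧢_φ ⋯ ⧢_φ u_k⟩ w`. -/
def piOneS (m : (List Y →₀ K) →ₗ[K] (List Y →₀ K) →ₗ[K] (List Y →₀ K))
    (S : List Y → K) : List Y → K := fun w =>
  ((cuts w).map fun parts =>
    algebraMap ℚ K ((-1) ^ (parts.length - 1) / (parts.length : ℚ)) *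
      pairPS S (prodM m (parts.map word))).sum

/-- Logarithm of a series `S` with `⟨S,1⟩ = 1`. -/
def logS (S : List Y → K) : List Y → K := fun w =>
  ∑ n ∈ Finset.Icc 1 w.length,
    algebraMap ℚ K ((-1) ^ (n - 1) / (n : ℚ)) * powS (fun t => S t - oneS t) n w

/-- Convolution of endomorphisms (valued in series), using a dual coproduct witness. -/
def convT (Δfn : List Y → (List Y × List Y →₀ K))
    (f g : (List Y →₀ K) → (List Y → K)) : (List Y →₀ K) → (List Y → K) :=
  fun P w => P.sum fun t a =>
    a * (Δfn t).sum fun p c => c * mulS (f (word p.1)) (g (word p.2)) w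

/-- The convolution unit `e = 1 ∘ ε`. -/
def eT : (List Y →₀ K) → (List Y → K) := fun P w => if w = [] then P [] else 0

/-- Convolution powers `π₁^{⋆ n}` of the Eulerian projector. -/
def convPowPi (m : (List Y →₀ K) →ₗ[K] (List Y →₀ K) →ₗ[K] (List Y →₀ K))
    (Δfn : List Y → (List Y × List Y →₀ K)) : ℕ → ((List Y →₀ K) → (List Y → K))
  | 0 => eT
  | n + 1 => convT Δfn (fun P => piOneS m fun t => P t) (convPowPi m Δfn n)

/-- Lyndon words: nonempty and lexicographically smaller than each proper suffix. -/
def IsLyndon [LinearOrder Y] (w : List Y) : Prop :=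
  w ≠ [] ∧ ∀ u v : List Y, u ≠ [] → v ≠ [] → w = u ++ v → List.Lex (· < ·) w v

/-- Strictly decreasing lists of Lyndon words with positive exponents,
indexing monomials in Lyndon words. -/
abbrev DecLyn (Y : Type*) [LinearOrder Y] :=
  {s : List (List Y × ℕ) // (∀ p ∈ s, IsLyndon p.1 ∧ 0 < p.2) ∧
    s.Chain' fun a b => List.Lex (· < ·) b.1 a.1}

/-- `⧢_φ`-monomial `l₁^{⧢ i₁} ⧢ ⋯ ⧢ l_k^{⧢ i_k}`. -/
def shMonomial (m : (List Y →₀ K) →ₗ[K] (List Y →₀ K) →ₗ[K] (List Y →₀ K))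
    (s : List (List Y × ℕ)) : List Y →₀ K :=
  s.foldr (fun p acc => m (mpow m (word p.1) p.2) acc) (word [])

/-- Concatenation monomial `Π_{l₁}^{i₁} ⋯ Π_{l_k}^{i_k}` in a family `Pi`. -/
def concMonomial (Pi : List Y → (List Y →₀ K)) (s : List (List Y × ℕ)) : List Y →₀ K :=
  s.foldr (fun p acc => concP (concPow (Pi p.1) p.2) acc) (word [])

/-- The singleton index `l¹ ∈ DecLyn Y` attached to a Lyndon word. -/
def singleIdx [LinearOrder Y] (l : List Y) (hl : IsLyndon l) : DecLyn Y :=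
  ⟨[(l, 1)], ⟨fun p hp => by
      rw [List.mem_singleton] at hp; subst hp; exact ⟨hl, Nat.one_pos⟩,
    List.isChain_singleton _⟩⟩

/-- `(s, r)` is the standard factorization of the Lyndon word `l`:
`l = sr` with `s, r` nonempty and `r` the lexicographically least proper suffix. -/
def StdFact [LinearOrder Y] (l s r : List Y) : Prop :=
  l = s ++ r ∧ s ≠ [] ∧ r ≠ [] ∧
  ∀ s' r' : List Y, l = s' ++ r' → s' ≠ [] → r' ≠ [] → r = r' ∨ List.Lex (· < ·) r r'

/-- `Pi` is the family defined by `Π_y = π₁(y)` on letters and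
`Π_l = [Π_s, Π_r]` for the standard factorization `(s,r)` of a Lyndon word `l`. -/
def IsPiFamily [LinearOrder Y]
    (m : (List Y →₀ K) →ₗ[K] (List Y →₀ K) →ₗ[K] (List Y →₀ K))
    (Pi : List Y → (List Y →₀ K)) : Prop :=
  (∀ y : Y, ∀ w : List Y, Pi [y] w = piOneS m (fun t => (word [y] : List Y →₀ K) t) w) ∧
  ∀ l s r : List Y, IsLyndon l → StdFact l s r →
    Pi l = concP (Pi s) (Pi r) - concP (Pi r) (Pi s)

/-- Multiplication of double series (concatenation on both factors). -/
def mulDS (S T : List Y × List Y → K) : List Y × List Y → K := fun p =>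
  ∑ i ∈ Finset.range (p.1.length + 1), ∑ j ∈ Finset.range (p.2.length + 1),
    S (p.1.take i, p.2.take j) * T (p.1.drop i, p.2.drop j)

/-- The image of a letter: `Δ(y_s) = y_s ⊗ 1 + 1 ⊗ y_s + Σ_{n,m} γ^{y_s}_{y_n,y_m} y_n ⊗ y_m`,
as a double series. -/
def Dletter (φ : Y → Y → (Y →₀ K)) (a : Y) : List Y × List Y → K := fun p =>
  (if p = ([a], []) then 1 else 0) + (if p = ([], [a]) then 1 else 0) +
  (match p with
   | ([n], [m]) => φ n m a
   | _ => 0)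

/-- The `conc`-morphism `Δ` into double series, defined on the letters by `Dletter`. -/
def DeltaRec (φ : Y → Y → (Y →₀ K)) : List Y → (List Y × List Y → K)
  | [] => fun p => if p = ([], []) then 1 else 0
  | a :: w => mulDS (Dletter φ a) (DeltaRec φ w)

set_option linter.unusedSectionVars false

def gam (φ : Y → Y → (Y →₀ K)) (c : Y) : List Y → List Y → K
  | [n], [m] => φ n m c
  | _, _ => 0

lemma Dletter_eq (φ : Y → Y → (Y →₀ K)) (c : Y) (x y : List Y) :
    Dletter φ c (x, y) =
      (if x = [c] ∧ y = [] then 1 else 0) + (if x = [] ∧ y = [c] then 1 else 0) +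
      gam φ c x y := by
  rcases x with _ | ⟨n, _ | ⟨n', x⟩⟩ <;> rcases y with _ | ⟨mm, _ | ⟨m', y⟩⟩ <;>
    simp [Dletter, gam, Prod.ext_iff]

lemma gam_left (φ : Y → Y → (Y →₀ K)) (c : Y) {x : List Y} (y : List Y)
    (hx : x.length ≠ 1) : gam φ c x y = 0 := by
  rcases x with _ | ⟨n, _ | ⟨n', x⟩⟩ <;> rcases y with _ | ⟨mm, _ | ⟨m', y⟩⟩ <;>
    simp [gam] at hx ⊢

lemma gam_right (φ : Y → Y → (Y →₀ K)) (c : Y) (x : List Y) {y : List Y}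
    (hy : y.length ≠ 1) : gam φ c x y = 0 := by
  rcases x with _ | ⟨n, _ | ⟨n', x⟩⟩ <;> rcases y with _ | ⟨mm, _ | ⟨m', y⟩⟩ <;>
    simp [gam] at hy ⊢

lemma consL_apply_nil (a : Y) (p : List Y →₀ K) : consL a p ([] : List Y) = 0 := by
  apply Finsupp.mapDomain_notin_range
  rintro ⟨t, ht⟩
  simp at ht

lemma consL_apply_cons (a c : Y) (w : List Y) (p : List Y →₀ K) :
    consL a p (c :: w) = if a = c then p w else 0 := by
  by_cases h : a = c
  · subst h
    rw [if_pos rfl]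
    exact Finsupp.mapDomain_apply (List.cons_injective) p w
  · rw [if_neg h]
    apply Finsupp.mapDomain_notin_range
    rintro ⟨t, ht⟩
    simp only [List.cons.injEq] at ht
    exact h ht.1

lemma finsupp_sum_ite (f : Y →₀ K) (c : Y) (X : K) :
    (f.sum fun e k => if e = c then k * X else 0) = f c * X := by
  rw [Finsupp.sum, Finset.sum_ite_eq' f.support c (fun e => f e * X)]
  split
  · rfl
  · rename_i h
    rw [Finsupp.notMem_support_iff.mp h, zero_mul]

lemma sum_take_zero (l : List Y) (F : List Y → ℕ → K)
    (hF : ∀ y j, y ≠ [] → F y j = 0) :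
    ∑ j ∈ Finset.range (l.length + 1), F (l.take j) j = F [] 0 := by
  rw [Finset.sum_eq_single_of_mem 0 (Finset.mem_range.mpr (by omega))
    (fun j hj hj0 => hF _ _ (by
      rw [Finset.mem_range] at hj
      intro h
      apply hj0
      have := congrArg List.length h
      rw [List.length_take] at this
      simp only [List.length_nil] at this
      omega))]
  simp

lemma sum_take_one (b : Y) (v : List Y) (F : List Y → ℕ → K)
    (hF : ∀ y j, y.length ≠ 1 → F y j = 0) :
    ∑ j ∈ Finset.range ((b :: v).length + 1), F ((b :: v).take j) j = F [b] 1 := by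
  rw [Finset.sum_eq_single_of_mem 1 (Finset.mem_range.mpr (by simp))
    (fun j hj hj1 => hF _ _ (by
      rw [Finset.mem_range, List.length_cons] at hj
      rw [List.length_take, List.length_cons]
      omega))]
  rfl

lemma mulDS_Dletter_nil_nil (φ : Y → Y → (Y →₀ K)) (c : Y) (T : List Y × List Y → K) :
    mulDS (Dletter φ c) T ([], []) = 0 := by
  simp [mulDS, Dletter_eq, gam]

lemma mulDS_Dletter_nil_cons (φ : Y → Y → (Y →₀ K)) (c : Y) (T : List Y × List Y → K)
    (b : Y) (v : List Y) :
    mulDS (Dletter φ c) T ([], b :: v) = if b = c then T ([], v) else 0 := by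
  show (∑ i ∈ Finset.range (([] : List Y).length + 1), ∑ j ∈ Finset.range ((b::v).length + 1),
      Dletter φ c (([] : List Y).take i, (b::v).take j) *
        T (([] : List Y).drop i, (b::v).drop j)) = _
  simp only [List.length_nil, Nat.zero_add, Finset.sum_range_one, List.take_nil, List.drop_nil]
  rw [sum_take_one b v
    (fun y j => Dletter φ c ([], y) * T ([], (b::v).drop j))
    (fun y j hy => by
      rw [Dletter_eq, gam_right φ c _ hy]
      have h1 : ¬(([] : List Y) = [c] ∧ y = []) := by simp
      have h2 : y ≠ [c] := fun h => by subst h; exact hy rfl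
      simp [h1, h2])]
  rw [Dletter_eq, gam_left φ c _ (by simp)]
  simp [List.cons.injEq]

lemma mulDS_Dletter_cons_nil (φ : Y → Y → (Y →₀ K)) (c : Y) (T : List Y × List Y → K)
    (a : Y) (u : List Y) :
    mulDS (Dletter φ c) T (a :: u, []) = if a = c then T (u, []) else 0 := by
  show (∑ i ∈ Finset.range ((a::u).length + 1), ∑ j ∈ Finset.range (([] : List Y).length + 1),
      Dletter φ c ((a::u).take i, ([] : List Y).take j) *
        T ((a::u).drop i, ([] : List Y).drop j)) = _
  simp only [List.length_nil, Nat.zero_add, Finset.sum_range_one, List.take_nil, List.drop_nil]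
  rw [sum_take_one a u
    (fun x i => Dletter φ c (x, []) * T ((a::u).drop i, []))
    (fun x i hx => by
      rw [Dletter_eq, gam_right φ c _ (by simp)]
      have h1 : x ≠ [c] := fun h => by subst h; exact hx rfl
      have h2 : ¬(x = [] ∧ ([] : List Y) = [c]) := by simp
      simp [h1, h2])]
  rw [Dletter_eq, gam_right φ c _ (by simp)]
  simp [List.cons.injEq]

lemma mulDS_Dletter_cons_cons (φ : Y → Y → (Y →₀ K)) (c : Y) (T : List Y × List Y → K)
    (a b : Y) (u v : List Y) :
    mulDS (Dletter φ c) T (a :: u, b :: v) =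
      (if a = c then T (u, b :: v) else 0) + (if b = c then T (a :: u, v) else 0) +
      φ a b c * T (u, v) := by
  show (∑ i ∈ Finset.range ((a::u).length + 1), ∑ j ∈ Finset.range ((b::v).length + 1),
      Dletter φ c ((a::u).take i, (b::v).take j) *
        T ((a::u).drop i, (b::v).drop j)) = _
  simp only [Dletter_eq, add_mul, Finset.sum_add_distrib]
  have hA : (∑ i ∈ Finset.range ((a::u).length + 1), ∑ j ∈ Finset.range ((b::v).length + 1),
      (if (a::u).take i = [c] ∧ (b::v).take j = [] then (1:K) else 0) *
        T ((a::u).drop i, (b::v).drop j)) = if a = c then T (u, b :: v) else 0 := by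
    rw [sum_take_one a u
      (fun x i => ∑ j ∈ Finset.range ((b::v).length + 1),
        (if x = [c] ∧ (b::v).take j = [] then (1:K) else 0) * T ((a::u).drop i, (b::v).drop j))
      (fun x i hx => by
        have h1 : x ≠ [c] := fun h => by subst h; exact hx rfl
        simp [h1])]
    rw [sum_take_zero (b::v)
      (fun y j => (if [a] = [c] ∧ y = [] then (1:K) else 0) * T ((a::u).drop 1, (b::v).drop j))
      (fun y j hy => by simp [hy])]
    simp [List.cons.injEq]
  have hB : (∑ i ∈ Finset.range ((a::u).length + 1), ∑ j ∈ Finset.range ((b::v).length + 1),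
      (if (a::u).take i = [] ∧ (b::v).take j = [c] then (1:K) else 0) *
        T ((a::u).drop i, (b::v).drop j)) = if b = c then T (a :: u, v) else 0 := by
    rw [sum_take_zero (a::u)
      (fun x i => ∑ j ∈ Finset.range ((b::v).length + 1),
        (if x = [] ∧ (b::v).take j = [c] then (1:K) else 0) * T ((a::u).drop i, (b::v).drop j))
      (fun x i hx => by simp [hx])]
    rw [sum_take_one b v
      (fun y j => (if ([] : List Y) = [] ∧ y = [c] then (1:K) else 0) *
        T ((a::u).drop 0, (b::v).drop j))
      (fun y j hy => by
        have h2 : y ≠ [c] := fun h => by subst h; exact hy rfl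
        simp [h2])]
    simp [List.cons.injEq]
  have hC : (∑ i ∈ Finset.range ((a::u).length + 1), ∑ j ∈ Finset.range ((b::v).length + 1),
      gam φ c ((a::u).take i) ((b::v).take j) * T ((a::u).drop i, (b::v).drop j)) =
      φ a b c * T (u, v) := by
    rw [sum_take_one a u
      (fun x i => ∑ j ∈ Finset.range ((b::v).length + 1),
        gam φ c x ((b::v).take j) * T ((a::u).drop i, (b::v).drop j))
      (fun x i hx => by
        simp [gam_left φ c _ hx])]
    rw [sum_take_one b v
      (fun y j => gam φ c [a] y * T ((a::u).drop 1, (b::v).drop j))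
      (fun y j hy => by simp [gam_right φ c _ hy])]
    simp [gam]
  rw [hA, hB, hC]

/-- `⟨u ⧢_φ v, w⟩ = ⟨u ⊗ v, Δ(w)⟩` for all words `u, v, w`. -/
theorem phiShuffle_pairing_DeltaRec (φ : Y → Y → (Y →₀ K))
    (m : (List Y →₀ K) →ₗ[K] (List Y →₀ K) →ₗ[K] (List Y →₀ K))
    (hm : IsPhiShuffle φ m) :
    ∀ u v w : List Y, (m (word u) (word v)) w = DeltaRec φ w (u, v) := by
  intro u v w
  induction w generalizing u v with
  | nil =>
    show _ = if ((u, v) : List Y × List Y) = ([], []) then 1 else 0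
    rcases u with _ | ⟨a, u⟩
    · rw [hm.1]
      rcases v with _ | ⟨b, v⟩ <;> simp [word, Finsupp.single_apply, Prod.ext_iff]
    · rcases v with _ | ⟨b, v⟩
      · rw [hm.2.1]
        simp [word, Finsupp.single_apply, Prod.ext_iff]
      · rw [hm.2.2]
        simp only [Finsupp.add_apply, Finsupp.sum_apply, Finsupp.smul_apply,
          consL_apply_nil, smul_zero, Finsupp.sum, Finset.sum_const_zero, add_zero, Prod.mk.injEq]
        simp [Prod.ext_iff, consL_apply_nil]
  | cons c w ih =>
    show _ = mulDS (Dletter φ c) (DeltaRec φ w) (u, v)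
    rcases u with _ | ⟨a, u⟩
    · rcases v with _ | ⟨b, v⟩
      · rw [hm.1, mulDS_Dletter_nil_nil]
        simp [word, Finsupp.single_apply]
      · rw [hm.1, mulDS_Dletter_nil_cons, ← ih [] v, hm.1]
        simp only [word, Finsupp.single_apply]
        by_cases hb : b = c
        · subst hb
          simp [List.cons.injEq]
        · simp [hb, List.cons.injEq]
    · rcases v with _ | ⟨b, v⟩
      · rw [hm.2.1, mulDS_Dletter_cons_nil, ← ih u [], hm.2.1]
        simp only [word, Finsupp.single_apply]
        by_cases ha : a = c
        · subst ha
          simp [List.cons.injEq]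
        · simp [ha, List.cons.injEq]
      · rw [hm.2.2, mulDS_Dletter_cons_cons, ← ih u (b :: v), ← ih (a :: u) v, ← ih u v]
        simp only [Finsupp.add_apply, Finsupp.sum_apply, Finsupp.smul_apply,
          consL_apply_cons, smul_eq_mul, mul_ite, mul_zero]
        rw [finsupp_sum_ite]

end
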